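/- Let (H,•,1,Δ,ε,T) be a Hopf algebra and (H,⇀,↼) a matched pair of actions on H. Then H with the left action ⇀ and the left adjoint coaction Ad_L(a)=a₁•T(a₃)⊗a₂ is a left-left Yetter–Drinfeld module over H, i.e. Ad_L(a⇀b) = a₁•b₁•T(b₃)•T(a₃) ⊗ (a₂⇀b₂). -/

import Mathlib

open TensorProduct

noncomputable section

variable (k H : Type*) [Field k] [Ring H] [HopfAlgebra k H]

/-- Multiplication of `H` as a linear map. -/
def mu : H ⊗[k] H →ₗ[k] H := LinearMap.mul' k H
/-- Comultiplication. -/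
def delta : H →ₗ[k] H ⊗[k] H := Coalgebra.comul
/-- Counit. -/
def eps : H →ₗ[k] k := Coalgebra.counit
/-- Flip `a⊗b ↦ b⊗a`. -/
def tau : H ⊗[k] H →ₗ[k] H ⊗[k] H := (TensorProduct.comm k H H).toLinearMap
/-- Associator. -/
def assocMap : (H ⊗[k] H) ⊗[k] H →ₗ[k] H ⊗[k] (H ⊗[k] H) :=
  (TensorProduct.assoc k H H H).toLinearMap
/-- Inverse associator. -/
def assocInv : H ⊗[k] (H ⊗[k] H) →ₗ[k] (H ⊗[k] H) ⊗[k] H :=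
  (TensorProduct.assoc k H H H).symm.toLinearMap
/-- The middle-four interchange `(a⊗b)⊗(c⊗d) ↦ (a⊗c)⊗(b⊗d)`. -/
def ttcMap : (H ⊗[k] H) ⊗[k] (H ⊗[k] H) →ₗ[k] (H ⊗[k] H) ⊗[k] (H ⊗[k] H) :=
  (TensorProduct.tensorTensorTensorComm k H H H H).toLinearMap
/-- `a⊗b ↦ (a₁⊗b₁)⊗(a₂⊗b₂)` (Sweedler notation). -/
def dd : H ⊗[k] H →ₗ[k] (H ⊗[k] H) ⊗[k] (H ⊗[k] H) :=
  ttcMap k H ∘ₗ map (delta k H) (delta k H)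
/-- `a⊗b ↦ ((a₁⊗b₁)⊗(a₂⊗b₂))⊗(a₃⊗b₃)`. -/
def ddd : H ⊗[k] H →ₗ[k] ((H ⊗[k] H) ⊗[k] (H ⊗[k] H)) ⊗[k] (H ⊗[k] H) :=
  map (dd k H) LinearMap.id ∘ₗ dd k H
/-- `a⊗b ↦ ε(a)ε(b)`. -/
def epseps : H ⊗[k] H →ₗ[k] k := LinearMap.mul' k k ∘ₗ map (eps k H) (eps k H)
/-- `σ(a⊗b) = (a₁⇀b₁)⊗(a₂↼b₂)` attached to a pair of "actions". -/
def sig (l r : H ⊗[k] H →ₗ[k] H) : H ⊗[k] H →ₗ[k] H ⊗[k] H :=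
  map l r ∘ₗ dd k H

/-- The antipode of `H`. -/
def anti : H →ₗ[k] H := HopfAlgebra.antipode k

/-- A matched pair of actions `(H,⇀,↼)` on the Hopf algebra `H` (Definition 2.1):
`l`, `r` are a left and a right action of `H` on itself making `H` a left and right
`H`-module coalgebra, satisfying (mp.1)–(mp.4) and the braided commutativity (★). -/
structure MatchedPairOfActions (l r : H ⊗[k] H →ₗ[k] H) : Prop where
  one_act : ∀ b : H, l ((1 : H) ⊗ₜ[k] b) = b
  mul_act : ∀ a b c : H, l ((a * b) ⊗ₜ[k] c) = l (a ⊗ₜ[k] l (b ⊗ₜ[k] c))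
  act_one : ∀ a : H, r (a ⊗ₜ[k] (1 : H)) = a
  act_mul : ∀ a b c : H, r (a ⊗ₜ[k] (b * c)) = r (r (a ⊗ₜ[k] b) ⊗ₜ[k] c)
  comul_l : delta k H ∘ₗ l = map l l ∘ₗ dd k H
  counit_l : eps k H ∘ₗ l = epseps k H
  comul_r : delta k H ∘ₗ r = map r r ∘ₗ dd k H
  counit_r : eps k H ∘ₗ r = epseps k H
  mp1 : ∀ a : H, l (a ⊗ₜ[k] (1 : H)) = eps k H a • (1 : H)
  mp2 : ∀ b : H, r ((1 : H) ⊗ₜ[k] b) = eps k H b • (1 : H)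
  mp3 : l ∘ₗ map LinearMap.id (mu k H) ∘ₗ assocMap k H
      = mu k H ∘ₗ map LinearMap.id l ∘ₗ assocMap k H ∘ₗ map (sig k H l r) LinearMap.id
  mp4 : r ∘ₗ map (mu k H) LinearMap.id
      = mu k H ∘ₗ map r LinearMap.id ∘ₗ assocInv k H ∘ₗ map LinearMap.id (sig k H l r) ∘ₗ
          assocMap k H
  star : mu k H ∘ₗ sig k H l r = mu k H

/-- The second product `a·b := a₁•(T(a₂)⇀b)` attached to a left action `l = ⇀`. -/
def cdot (l : H ⊗[k] H →ₗ[k] H) : H ⊗[k] H →ₗ[k] H :=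
  mu k H ∘ₗ map LinearMap.id l ∘ₗ assocMap k H ∘ₗ
    map (map LinearMap.id (anti k H) ∘ₗ delta k H) LinearMap.id

/-- The map `S(a) := a₁⇀T(a₂)` attached to a left action `l = ⇀`. -/
def Smap (l : H ⊗[k] H →ₗ[k] H) : H →ₗ[k] H :=
  l ∘ₗ map LinearMap.id (anti k H) ∘ₗ delta k H

/-- The left adjoint coaction `Ad_L(a) = (a₁•T(a₃)) ⊗ a₂`. -/
def adL : H →ₗ[k] H ⊗[k] H :=
  map (mu k H ∘ₗ map LinearMap.id (anti k H)) LinearMap.id ∘ₗ assocInv k H ∘ₗ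
    map LinearMap.id (tau k H) ∘ₗ map LinearMap.id (delta k H) ∘ₗ delta k H


namespace YD
open Coalgebra
universe u v v' w

variable {k : Type u} [CommSemiring k]

structure CoStr (k : Type u) (C : Type v) [CommSemiring k] [AddCommMonoid C] [Module k C] where
  δ : C →ₗ[k] C ⊗[k] C
  ε : C →ₗ[k] k
  coassoc : (TensorProduct.assoc k C C C).toLinearMap ∘ₗ δ.rTensor C ∘ₗ δ = δ.lTensor C ∘ₗ δ
  rT : ε.rTensor C ∘ₗ δ = TensorProduct.mk k k C 1
  lT : ε.lTensor C ∘ₗ δ = (TensorProduct.mk k C k).flip 1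

variable {C : Type v} [AddCommMonoid C] [Module k C]
variable {C' : Type v'} [AddCommMonoid C'] [Module k C']
variable {A : Type w} [Semiring A] [Algebra k A]

def conv (S : CoStr k C) (f g : C →ₗ[k] A) : C →ₗ[k] A :=
  LinearMap.mul' k A ∘ₗ map f g ∘ₗ S.δ

def cunit (S : CoStr k C) : C →ₗ[k] A := Algebra.linearMap k A ∘ₗ S.ε

theorem conv_assoc (S : CoStr k C) (f g h : C →ₗ[k] A) :
    conv S (conv S f g) h = conv S f (conv S g h) := by
  unfold conv
  have h1 : map (LinearMap.mul' k A ∘ₗ map f g ∘ₗ S.δ) h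
      = (map (LinearMap.mul' k A) LinearMap.id ∘ₗ map (map f g) h) ∘ₗ S.δ.rTensor C := by
    apply TensorProduct.ext'; intro x y; simp
  have h2 : map f (LinearMap.mul' k A ∘ₗ map g h ∘ₗ S.δ)
      = (map LinearMap.id (LinearMap.mul' k A) ∘ₗ map f (map g h)) ∘ₗ S.δ.lTensor C := by
    apply TensorProduct.ext'; intro x y; simp
  rw [h1, h2]
  have hco : S.δ.rTensor C ∘ₗ S.δ
      = (TensorProduct.assoc k C C C).symm.toLinearMap ∘ₗ S.δ.lTensor C ∘ₗ S.δ := by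
    rw [← S.coassoc]; ext c; simp
  have key : (LinearMap.mul' k A ∘ₗ (map (LinearMap.mul' k A) LinearMap.id ∘ₗ map (map f g) h))
      ∘ₗ (TensorProduct.assoc k C C C).symm.toLinearMap
      = LinearMap.mul' k A ∘ₗ (map LinearMap.id (LinearMap.mul' k A) ∘ₗ map f (map g h)) := by
    ext x y z
    simp [mul_assoc]
  calc LinearMap.mul' k A ∘ₗ ((map (LinearMap.mul' k A) LinearMap.id ∘ₗ map (map f g) h) ∘ₗ S.δ.rTensor C) ∘ₗ S.δ
      = (LinearMap.mul' k A ∘ₗ (map (LinearMap.mul' k A) LinearMap.id ∘ₗ map (map f g) h))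
          ∘ₗ (S.δ.rTensor C ∘ₗ S.δ) := by
        simp only [LinearMap.comp_assoc]
    _ = ((LinearMap.mul' k A ∘ₗ (map (LinearMap.mul' k A) LinearMap.id ∘ₗ map (map f g) h))
          ∘ₗ (TensorProduct.assoc k C C C).symm.toLinearMap) ∘ₗ (S.δ.lTensor C ∘ₗ S.δ) := by
        rw [hco]; simp only [LinearMap.comp_assoc]
    _ = _ := by rw [key]; simp only [LinearMap.comp_assoc]

theorem conv_one_left (S : CoStr k C) (f : C →ₗ[k] A) : conv S (cunit S) f = f := by
  have h3 : map (cunit S (A := A)) f = (map (Algebra.linearMap k A) f) ∘ₗ S.ε.rTensor C := by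
    apply TensorProduct.ext'; intro x y; simp [cunit]
  rw [conv, h3, LinearMap.comp_assoc, S.rT]
  ext c; simp [Algebra.smul_def]

theorem conv_one_right (S : CoStr k C) (f : C →ₗ[k] A) : conv S f (cunit S) = f := by
  have h3 : map f (cunit S (A := A)) = (map f (Algebra.linearMap k A)) ∘ₗ S.ε.lTensor C := by
    apply TensorProduct.ext'; intro x y; simp [cunit]
  rw [conv, h3, LinearMap.comp_assoc, S.lT]
  ext c; simp [Algebra.smul_def, Algebra.commutes]

theorem conv_cancel (S : CoStr k C) {u u' v v' x y : C →ₗ[k] A}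
    (hu : conv S u' u = cunit S) (hv : conv S v v' = cunit S)
    (h : conv S u (conv S x v) = conv S u (conv S y v)) : x = y := by
  have key : ∀ z : C →ₗ[k] A, conv S u' (conv S (conv S u (conv S z v)) v') = z := by
    intro z
    rw [conv_assoc S u (conv S z v) v', conv_assoc S z v v', hv, conv_one_right,
      ← conv_assoc S u' u z, hu, conv_one_left]
  calc x = conv S u' (conv S (conv S u (conv S x v)) v') := (key x).symm
    _ = conv S u' (conv S (conv S u (conv S y v)) v') := by rw [h]
    _ = y := key y

/-- `x ↦ x ⊗ 1`. -/
def inlm : A →ₗ[k] A ⊗[k] A := (TensorProduct.mk k A A).flip 1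
/-- `x ↦ 1 ⊗ x`. -/
def inrm : A →ₗ[k] A ⊗[k] A := TensorProduct.mk k A A 1

def inl (f : C →ₗ[k] A) : C →ₗ[k] A ⊗[k] A := inlm ∘ₗ f
def inr (f : C →ₗ[k] A) : C →ₗ[k] A ⊗[k] A := inrm ∘ₗ f

theorem inl_comp (f : C →ₗ[k] A) (h : C' →ₗ[k] C) : inl f ∘ₗ h = inl (f ∘ₗ h) := rfl
theorem inl_apply (f : C →ₗ[k] A) (c : C) : inl f c = f c ⊗ₜ[k] 1 := rfl
theorem inr_apply (f : C →ₗ[k] A) (c : C) : inr f c = 1 ⊗ₜ[k] f c := rfl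

theorem inl_conv (S : CoStr k C) (f g : C →ₗ[k] A) :
    conv S (inl f) (inl g) = inl (conv S f g) := by
  unfold conv inl
  have h1 : map (inlm (k := k) (A := A) ∘ₗ f) (inlm ∘ₗ g)
      = map (inlm (k := k) (A := A)) inlm ∘ₗ map f g := by
    apply TensorProduct.ext'; intro x y; simp
  have h2 : LinearMap.mul' k (A ⊗[k] A) ∘ₗ map (inlm (k := k) (A := A)) inlm
      = inlm ∘ₗ LinearMap.mul' k A := by
    apply TensorProduct.ext'; intro x y
    simp [inlm, Algebra.TensorProduct.tmul_mul_tmul]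
  rw [h1, ← LinearMap.comp_assoc _ _ (LinearMap.mul' k (A ⊗[k] A)),
    ← LinearMap.comp_assoc, h2]
  simp only [LinearMap.comp_assoc]

theorem inr_conv (S : CoStr k C) (f g : C →ₗ[k] A) :
    conv S (inr f) (inr g) = inr (conv S f g) := by
  unfold conv inr
  have h1 : map (inrm (k := k) (A := A) ∘ₗ f) (inrm ∘ₗ g)
      = map (inrm (k := k) (A := A)) inrm ∘ₗ map f g := by
    apply TensorProduct.ext'; intro x y; simp
  have h2 : LinearMap.mul' k (A ⊗[k] A) ∘ₗ map (inrm (k := k) (A := A)) inrm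
      = inrm ∘ₗ LinearMap.mul' k A := by
    apply TensorProduct.ext'; intro x y
    simp [inrm, Algebra.TensorProduct.tmul_mul_tmul]
  rw [h1, ← LinearMap.comp_assoc _ _ (LinearMap.mul' k (A ⊗[k] A)),
    ← LinearMap.comp_assoc, h2]
  simp only [LinearMap.comp_assoc]

theorem inl_cunit (S : CoStr k C) : inl (cunit S (A := A)) = cunit S := by
  ext c
  simp [inl, inlm, cunit, Algebra.algebraMap_eq_smul_one, smul_tmul',
    Algebra.TensorProduct.one_def]

theorem inr_cunit (S : CoStr k C) : inr (cunit S (A := A)) = cunit S := by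
  ext c
  simp [inr, inrm, cunit, Algebra.algebraMap_eq_smul_one, tmul_smul,
    Algebra.TensorProduct.one_def]

theorem inl_conv_inr (S : CoStr k C) (f g : C →ₗ[k] A) :
    conv S (inl f) (inr g) = map f g ∘ₗ S.δ := by
  unfold conv inl inr
  have h1 : map (inlm (k := k) (A := A) ∘ₗ f) (inrm ∘ₗ g)
      = map (inlm (k := k) (A := A)) inrm ∘ₗ map f g := by
    apply TensorProduct.ext'; intro x y; simp
  have h2 : LinearMap.mul' k (A ⊗[k] A) ∘ₗ map (inlm (k := k) (A := A)) inrm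
      = LinearMap.id := by
    apply TensorProduct.ext'; intro x y
    simp [inlm, inrm, Algebra.TensorProduct.tmul_mul_tmul]
  rw [h1, ← LinearMap.comp_assoc _ _ (LinearMap.mul' k (A ⊗[k] A)),
    ← LinearMap.comp_assoc, h2]
  simp only [LinearMap.comp_assoc, LinearMap.id_comp]

theorem conv_comp_coalgHom (S : CoStr k C) (S' : CoStr k C') (h : C' →ₗ[k] C)
    (hδ : S.δ ∘ₗ h = map h h ∘ₗ S'.δ) (f g : C →ₗ[k] A) :
    conv S f g ∘ₗ h = conv S' (f ∘ₗ h) (g ∘ₗ h) := by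
  unfold conv
  rw [map_comp]
  simp only [LinearMap.comp_assoc]
  rw [← hδ]

theorem algHom_comp_conv {B : Type*} [Semiring B] [Algebra k B] (S : CoStr k C)
    (φ : A →ₗ[k] B) (hφ : φ ∘ₗ LinearMap.mul' k A = LinearMap.mul' k B ∘ₗ map φ φ)
    (f g : C →ₗ[k] A) : φ ∘ₗ conv S f g = conv S (φ ∘ₗ f) (φ ∘ₗ g) := by
  unfold conv
  rw [map_comp]
  simp only [← LinearMap.comp_assoc]
  rw [hφ]

end YD

namespace YD
open Coalgebra
open scoped Coalgebra

variable (k H : Type*) [Field k] [Ring H] [HopfAlgebra k H]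

/-- The coalgebra structure of `H`. -/
def SH : CoStr k H :=
  ⟨delta k H, eps k H, Coalgebra.coassoc, Coalgebra.rTensor_counit_comp_comul,
    Coalgebra.lTensor_counit_comp_comul⟩

theorem dd_tmul (a b : H) {ι κ : Type*} (ra : Coalgebra.Repr k a ι) (rb : Coalgebra.Repr k b κ) :
    dd k H (a ⊗ₜ[k] b) = ∑ i ∈ ra.index, ∑ j ∈ rb.index,
      (ra.left i ⊗ₜ[k] rb.left j) ⊗ₜ[k] (ra.right i ⊗ₜ[k] rb.right j) := by
  have h : dd k H (a ⊗ₜ[k] b)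
      = ttcMap k H ((Coalgebra.comul a) ⊗ₜ[k] (Coalgebra.comul b)) := rfl
  rw [h, ← ra.eq, ← rb.eq, TensorProduct.sum_tmul, map_sum]
  refine Finset.sum_congr rfl fun i _ => ?_
  rw [TensorProduct.tmul_sum, map_sum]
  refine Finset.sum_congr rfl fun j _ => ?_
  simp [ttcMap]

/-- Step A: naturality for `rTensor dd`. -/
theorem stepA : map (dd k H) LinearMap.id ∘ₗ ttcMap k H
    = map (ttcMap k H) LinearMap.id
      ∘ₗ (TensorProduct.tensorTensorTensorComm k (H ⊗[k] H) H (H ⊗[k] H) H).toLinearMap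
      ∘ₗ map (map (delta k H) LinearMap.id) (map (delta k H) LinearMap.id) := by
  ext x y z w
  simp [dd, ttcMap]

/-- Step B: naturality for `lTensor dd`. -/
theorem stepB : map LinearMap.id (dd k H) ∘ₗ ttcMap k H
    = map LinearMap.id (ttcMap k H)
      ∘ₗ (TensorProduct.tensorTensorTensorComm k H (H ⊗[k] H) H (H ⊗[k] H)).toLinearMap
      ∘ₗ map (map LinearMap.id (delta k H)) (map LinearMap.id (delta k H)) := by
  ext x y z w
  simp [dd, ttcMap]

/-- Structural lemma for coassociativity of `dd`. -/
theorem struct1 :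
    (TensorProduct.assoc k (H ⊗[k] H) (H ⊗[k] H) (H ⊗[k] H)).toLinearMap
      ∘ₗ map (ttcMap k H) LinearMap.id
      ∘ₗ (TensorProduct.tensorTensorTensorComm k (H ⊗[k] H) H (H ⊗[k] H) H).toLinearMap
      ∘ₗ map (TensorProduct.assoc k H H H).symm.toLinearMap
          (TensorProduct.assoc k H H H).symm.toLinearMap
    = map LinearMap.id (ttcMap k H)
      ∘ₗ (TensorProduct.tensorTensorTensorComm k H (H ⊗[k] H) H (H ⊗[k] H)).toLinearMap := by
  ext x u v y w z
  simp [ttcMap]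

/-- `map mu mu ∘ ttc = mul'` on `H ⊗ H`. -/
theorem mulHH : map (mu k H) (mu k H) ∘ₗ ttcMap k H
    = LinearMap.mul' k (H ⊗[k] H) := by
  ext x y z w
  simp [ttcMap, mu, Algebra.TensorProduct.tmul_mul_tmul]

/-- The coalgebra structure `(dd, epseps)` of `H ⊗ H`. -/
def SC : CoStr k (H ⊗[k] H) where
  δ := dd k H
  ε := epseps k H
  coassoc := by
    apply TensorProduct.ext'
    intro a b
    have hdd : dd k H (a ⊗ₜ[k] b)
        = ttcMap k H (Coalgebra.comul a ⊗ₜ[k] Coalgebra.comul b) := rfl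
    simp only [LinearMap.comp_apply]
    rw [hdd]
    have e1 : (dd k H).rTensor (H ⊗[k] H) (ttcMap k H (Coalgebra.comul a ⊗ₜ[k] Coalgebra.comul b))
        = map (ttcMap k H) LinearMap.id
          ((TensorProduct.tensorTensorTensorComm k (H ⊗[k] H) H (H ⊗[k] H) H).toLinearMap
            ((map (delta k H) LinearMap.id (Coalgebra.comul a)) ⊗ₜ[k]
              (map (delta k H) LinearMap.id (Coalgebra.comul b)))) := by
      have := LinearMap.congr_fun (stepA k H) (Coalgebra.comul a ⊗ₜ[k] Coalgebra.comul b)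
      simpa [LinearMap.rTensor] using this
    have e2 : (dd k H).lTensor (H ⊗[k] H) (ttcMap k H (Coalgebra.comul a ⊗ₜ[k] Coalgebra.comul b))
        = map LinearMap.id (ttcMap k H)
          ((TensorProduct.tensorTensorTensorComm k H (H ⊗[k] H) H (H ⊗[k] H)).toLinearMap
            ((map LinearMap.id (delta k H) (Coalgebra.comul a)) ⊗ₜ[k]
              (map LinearMap.id (delta k H) (Coalgebra.comul b)))) := by
      have := LinearMap.congr_fun (stepB k H) (Coalgebra.comul a ⊗ₜ[k] Coalgebra.comul b)
      simpa [LinearMap.lTensor] using this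
    rw [e1, e2]
    have ca : map (delta k H) LinearMap.id (Coalgebra.comul a)
        = (TensorProduct.assoc k H H H).symm.toLinearMap
            (map LinearMap.id (delta k H) (Coalgebra.comul a)) := by
      simpa [LinearMap.rTensor, LinearMap.lTensor, delta] using
        (Coalgebra.coassoc_symm_apply (R := k) a).symm
    have cb : map (delta k H) LinearMap.id (Coalgebra.comul b)
        = (TensorProduct.assoc k H H H).symm.toLinearMap
            (map LinearMap.id (delta k H) (Coalgebra.comul b)) := by
      simpa [LinearMap.rTensor, LinearMap.lTensor, delta] using
        (Coalgebra.coassoc_symm_apply (R := k) b).symm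
    rw [ca, cb]
    have := LinearMap.congr_fun (struct1 k H)
      ((map LinearMap.id (delta k H) (Coalgebra.comul a)) ⊗ₜ[k]
        (map LinearMap.id (delta k H) (Coalgebra.comul b)))
    simpa using this
  rT := by
    apply TensorProduct.ext'
    intro a b
    have hdd : dd k H (a ⊗ₜ[k] b)
        = ttcMap k H (Coalgebra.comul a ⊗ₜ[k] Coalgebra.comul b) := rfl
    simp only [LinearMap.comp_apply]
    rw [hdd]
    have eA : map (epseps k H) LinearMap.id ∘ₗ ttcMap k H
        = map (LinearMap.mul' k k) LinearMap.id
          ∘ₗ (TensorProduct.tensorTensorTensorComm k k H k H).toLinearMap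
          ∘ₗ map (map (eps k H) LinearMap.id) (map (eps k H) LinearMap.id) := by
      ext x y z w
      simp [epseps, ttcMap]
    have := LinearMap.congr_fun eA (Coalgebra.comul a ⊗ₜ[k] Coalgebra.comul b)
    have h1 : map (eps k H) LinearMap.id (Coalgebra.comul a) = (1 : k) ⊗ₜ[k] a := by
      simpa [LinearMap.rTensor, eps] using Coalgebra.rTensor_counit_comul (R := k) a
    have h2 : map (eps k H) LinearMap.id (Coalgebra.comul b) = (1 : k) ⊗ₜ[k] b := by
      simpa [LinearMap.rTensor, eps] using Coalgebra.rTensor_counit_comul (R := k) b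
    simp only [LinearMap.comp_apply] at this
    simp only [LinearMap.rTensor]
    rw [this]; simp only [map_tmul]; rw [h1, h2]
    simp [ttcMap]
  lT := by
    apply TensorProduct.ext'
    intro a b
    have hdd : dd k H (a ⊗ₜ[k] b)
        = ttcMap k H (Coalgebra.comul a ⊗ₜ[k] Coalgebra.comul b) := rfl
    simp only [LinearMap.comp_apply]
    rw [hdd]
    have eA : map LinearMap.id (epseps k H) ∘ₗ ttcMap k H
        = map LinearMap.id (LinearMap.mul' k k)
          ∘ₗ (TensorProduct.tensorTensorTensorComm k H k H k).toLinearMap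
          ∘ₗ map (map LinearMap.id (eps k H)) (map LinearMap.id (eps k H)) := by
      ext x y z w
      simp [epseps, ttcMap]
    have := LinearMap.congr_fun eA (Coalgebra.comul a ⊗ₜ[k] Coalgebra.comul b)
    have h1 : map LinearMap.id (eps k H) (Coalgebra.comul a) = a ⊗ₜ[k] (1 : k) := by
      simpa [LinearMap.lTensor, eps] using Coalgebra.lTensor_counit_comul (R := k) a
    have h2 : map LinearMap.id (eps k H) (Coalgebra.comul b) = b ⊗ₜ[k] (1 : k) := by
      simpa [LinearMap.lTensor, eps] using Coalgebra.lTensor_counit_comul (R := k) b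
    simp only [LinearMap.comp_apply] at this
    simp only [LinearMap.lTensor]
    rw [this]; simp only [map_tmul]; rw [h1, h2]
    simp [ttcMap]

end YD

namespace YD
open Coalgebra
open scoped Coalgebra

variable (k H : Type*) [Field k] [Ring H] [HopfAlgebra k H]

theorem comul_mu : delta k H ∘ₗ mu k H = map (mu k H) (mu k H) ∘ₗ dd k H := by
  apply TensorProduct.ext'
  intro a b
  have hdd : dd k H (a ⊗ₜ[k] b)
      = ttcMap k H (Coalgebra.comul a ⊗ₜ[k] Coalgebra.comul b) := rfl
  have := LinearMap.congr_fun (mulHH k H) (Coalgebra.comul a ⊗ₜ[k] Coalgebra.comul b)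
  simp only [LinearMap.comp_apply] at this ⊢
  rw [hdd, this]
  simp [delta, mu, Bialgebra.comul_mul]

theorem counit_mu : eps k H ∘ₗ mu k H = epseps k H := by
  apply TensorProduct.ext'
  intro a b
  simp [eps, mu, epseps, Bialgebra.counit_mul]

theorem conv_anti_right {C' : Type*} [AddCommMonoid C'] [Module k C'] (S : CoStr k C')
    (h : C' →ₗ[k] H) (hδ : delta k H ∘ₗ h = map h h ∘ₗ S.δ)
    (hε : eps k H ∘ₗ h = S.ε) : conv S h (anti k H ∘ₗ h) = cunit S := by
  unfold conv
  have h1 : map h (anti k H ∘ₗ h) = map LinearMap.id (anti k H) ∘ₗ map h h := by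
    apply TensorProduct.ext'; intro x y; simp
  rw [h1]
  calc LinearMap.mul' k H ∘ₗ (map LinearMap.id (anti k H) ∘ₗ map h h) ∘ₗ S.δ
      = LinearMap.mul' k H ∘ₗ map LinearMap.id (anti k H) ∘ₗ (map h h ∘ₗ S.δ) := by
        simp only [LinearMap.comp_assoc]
    _ = LinearMap.mul' k H ∘ₗ map LinearMap.id (anti k H) ∘ₗ (delta k H ∘ₗ h) := by rw [← hδ]
    _ = (LinearMap.mul' k H ∘ₗ map LinearMap.id (anti k H) ∘ₗ delta k H) ∘ₗ h := by
        simp only [LinearMap.comp_assoc]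
    _ = (Algebra.linearMap k H ∘ₗ eps k H) ∘ₗ h :=  by
        rw [show LinearMap.mul' k H ∘ₗ map LinearMap.id (anti k H) ∘ₗ delta k H
            = Algebra.linearMap k H ∘ₗ eps k H from HopfAlgebra.mul_antipode_lTensor_comul]
    _ = cunit S := by rw [LinearMap.comp_assoc, hε]; rfl

theorem conv_anti_left {C' : Type*} [AddCommMonoid C'] [Module k C'] (S : CoStr k C')
    (h : C' →ₗ[k] H) (hδ : delta k H ∘ₗ h = map h h ∘ₗ S.δ)
    (hε : eps k H ∘ₗ h = S.ε) : conv S (anti k H ∘ₗ h) h = cunit S := by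
  unfold conv
  have h1 : map (anti k H ∘ₗ h) h = map (anti k H) LinearMap.id ∘ₗ map h h := by
    apply TensorProduct.ext'; intro x y; simp
  rw [h1]
  calc LinearMap.mul' k H ∘ₗ (map (anti k H) LinearMap.id ∘ₗ map h h) ∘ₗ S.δ
      = LinearMap.mul' k H ∘ₗ map (anti k H) LinearMap.id ∘ₗ (map h h ∘ₗ S.δ) := by
        simp only [LinearMap.comp_assoc]
    _ = LinearMap.mul' k H ∘ₗ map (anti k H) LinearMap.id ∘ₗ (delta k H ∘ₗ h) := by rw [← hδ]
    _ = (LinearMap.mul' k H ∘ₗ map (anti k H) LinearMap.id ∘ₗ delta k H) ∘ₗ h := by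
        simp only [LinearMap.comp_assoc]
    _ = (Algebra.linearMap k H ∘ₗ eps k H) ∘ₗ h :=  by
        rw [show LinearMap.mul' k H ∘ₗ map (anti k H) LinearMap.id ∘ₗ delta k H
            = Algebra.linearMap k H ∘ₗ eps k H from HopfAlgebra.mul_antipode_rTensor_comul]
    _ = cunit S := by rw [LinearMap.comp_assoc, hε]; rfl

/-- `ν' = T∘mu∘tau∘(T⊗T)`-style map: `a ⊗ b ↦ T b * T a`. -/
def nu' : H ⊗[k] H →ₗ[k] H :=
  mu k H ∘ₗ map (anti k H) (anti k H) ∘ₗ tau k H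

theorem nu'_conv_mu : conv (SC k H) (nu' k H) (mu k H) = cunit (SC k H) := by
  apply TensorProduct.ext'
  intro a b
  set ra := ℛ k a
  set rb := ℛ k b
  have hval : conv (SC k H) (nu' k H) (mu k H) (a ⊗ₜ[k] b)
      = LinearMap.mul' k H (map (nu' k H) (mu k H) (dd k H (a ⊗ₜ[k] b))) := rfl
  rw [hval, dd_tmul k H a b ra rb]
  simp only [map_sum, map_tmul, LinearMap.mul'_apply]
  have hterm : ∀ i ∈ ra.index, ∀ j ∈ rb.index,
      nu' k H (ra.left i ⊗ₜ[k] rb.left j) * mu k H (ra.right i ⊗ₜ[k] rb.right j)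
        = anti k H (rb.left j) * ((anti k H (ra.left i) * ra.right i) * rb.right j) := by
    intro i _ j _
    simp [nu', mu, tau, anti, mul_assoc]
  rw [Finset.sum_congr rfl fun i hi => Finset.sum_congr rfl fun j hj => hterm i hi j hj]
  rw [Finset.sum_comm]
  have hinner : ∀ j, ∑ i ∈ ra.index,
      anti k H (rb.left j) * ((anti k H (ra.left i) * ra.right i) * rb.right j)
      = anti k H (rb.left j) * ((eps k H a • (1 : H)) * rb.right j) := by
    intro j
    rw [← Finset.mul_sum, ← Finset.sum_mul]
    rw [show ∑ i ∈ ra.index, anti k H (ra.left i) * ra.right i = eps k H a • (1 : H) from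
      HopfAlgebra.sum_antipode_mul_eq_smul ra]
  rw [Finset.sum_congr rfl fun j _ => hinner j]
  have : ∀ j, anti k H (rb.left j) * ((eps k H a • (1 : H)) * rb.right j)
      = eps k H a • (anti k H (rb.left j) * rb.right j) := by
    intro j
    rw [smul_mul_assoc, one_mul, mul_smul_comm]
  rw [Finset.sum_congr rfl fun j _ => this j, ← Finset.smul_sum]
  rw [show ∑ j ∈ rb.index, anti k H (rb.left j) * rb.right j = eps k H b • (1 : H) from
    HopfAlgebra.sum_antipode_mul_eq_smul rb]
  have : cunit (SC k H) (a ⊗ₜ[k] b) = algebraMap k H (eps k H a * eps k H b) := by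
    simp [cunit, SC, epseps, eps]
  rw [this, Algebra.algebraMap_eq_smul_one, mul_smul, smul_smul]

theorem mu_conv_nu : conv (SC k H) (mu k H) (anti k H ∘ₗ mu k H) = cunit (SC k H) :=
  conv_anti_right k H (SC k H) (mu k H) (comul_mu k H) (counit_mu k H)

theorem nu'_eq : nu' k H = anti k H ∘ₗ mu k H := by
  calc nu' k H = conv (SC k H) (nu' k H) (cunit (SC k H)) := (conv_one_right _ _).symm
    _ = conv (SC k H) (nu' k H)
        (conv (SC k H) (mu k H) (anti k H ∘ₗ mu k H)) := by rw [mu_conv_nu]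
    _ = conv (SC k H) (conv (SC k H) (nu' k H) (mu k H)) (anti k H ∘ₗ mu k H) :=
        (conv_assoc _ _ _ _).symm
    _ = conv (SC k H) (cunit (SC k H)) (anti k H ∘ₗ mu k H) := by rw [nu'_conv_mu]
    _ = anti k H ∘ₗ mu k H := conv_one_left _ _

theorem antipode_mul (x y : H) : anti k H (x * y) = anti k H y * anti k H x := by
  have := LinearMap.congr_fun (nu'_eq k H) (x ⊗ₜ[k] y)
  simpa [nu', mu, tau, anti] using this.symm

end YD

namespace YD
open Coalgebra
open scoped Coalgebra

variable (k H : Type*) [Field k] [Ring H] [HopfAlgebra k H]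

theorem struct3 :
    LinearMap.mul' k (H ⊗[k] H) ∘ₗ map LinearMap.id (inlm ∘ₗ anti k H)
      ∘ₗ (TensorProduct.assoc k H H H).symm.toLinearMap
    = map (mu k H ∘ₗ map LinearMap.id (anti k H)) LinearMap.id
      ∘ₗ (TensorProduct.assoc k H H H).symm.toLinearMap ∘ₗ map LinearMap.id (tau k H) := by
  ext x y z
  simp [inlm, mu, tau, Algebra.TensorProduct.tmul_mul_tmul]

theorem adL_eq : adL k H = conv (SH k H) (delta k H) (inl (anti k H)) := by
  apply LinearMap.ext
  intro a
  have hr : conv (SH k H) (delta k H) (inl (anti k H)) a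
      = LinearMap.mul' k (H ⊗[k] H)
          (map (delta k H) (inlm ∘ₗ anti k H) (Coalgebra.comul a)) := rfl
  have hsplit : map (delta k H) (inlm (k := k) (A := H) ∘ₗ anti k H)
      = map LinearMap.id (inlm ∘ₗ anti k H) ∘ₗ map (delta k H) LinearMap.id := by
    apply TensorProduct.ext'; intro x y; simp
  have ca : map (delta k H) LinearMap.id (Coalgebra.comul a)
      = (TensorProduct.assoc k H H H).symm.toLinearMap
          (map LinearMap.id (delta k H) (Coalgebra.comul a)) := by
    simpa [LinearMap.rTensor, LinearMap.lTensor, delta] using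
      (Coalgebra.coassoc_symm_apply (R := k) a).symm
  rw [hr, hsplit]
  simp only [LinearMap.comp_apply]
  rw [ca]
  have := LinearMap.congr_fun (struct3 k H) (map LinearMap.id (delta k H) (Coalgebra.comul a))
  simp only [LinearMap.comp_apply] at this
  rw [this]
  rfl

section Chain

variable (l r : H ⊗[k] H →ₗ[k] H)

theorem conv_l_r (hmp : MatchedPairOfActions k H l r) : conv (SC k H) l r = mu k H := by
  have h : conv (SC k H) l r = mu k H ∘ₗ sig k H l r := rfl
  rw [h, hmp.star]

theorem delta_l (hmp : MatchedPairOfActions k H l r) : delta k H ∘ₗ l = conv (SC k H) (inl l) (inr l) := by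
  rw [inl_conv_inr]; exact hmp.comul_l

theorem delta_r (hmp : MatchedPairOfActions k H l r) : delta k H ∘ₗ r = conv (SC k H) (inl r) (inr r) := by
  rw [inl_conv_inr]; exact hmp.comul_r

theorem delta_algmap : delta k H ∘ₗ LinearMap.mul' k H
    = LinearMap.mul' k (H ⊗[k] H) ∘ₗ map (delta k H) (delta k H) := by
  apply TensorProduct.ext'; intro x y
  simp [delta, Bialgebra.comul_mul]

theorem E_eq (hmp : MatchedPairOfActions k H l r) :
    conv (SC k H) (conv (SC k H) (inl l) (inl r)) (conv (SC k H) (inr l) (inr r))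
      = conv (SC k H) (conv (SC k H) (inl l) (inr l)) (conv (SC k H) (inl r) (inr r)) := by
  have e1 : delta k H ∘ₗ mu k H
      = conv (SC k H) (conv (SC k H) (inl l) (inl r)) (conv (SC k H) (inr l) (inr r)) := by
    have h0 : delta k H ∘ₗ mu k H = conv (SC k H) (inl (mu k H)) (inr (mu k H)) := by
      rw [inl_conv_inr]; exact comul_mu k H
    rw [h0, ← conv_l_r k H l r hmp, ← inl_conv, ← inr_conv]
  have e2 : delta k H ∘ₗ mu k H
      = conv (SC k H) (conv (SC k H) (inl l) (inr l)) (conv (SC k H) (inl r) (inr r)) := by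
    have h0 : delta k H ∘ₗ mu k H = delta k H ∘ₗ conv (SC k H) l r := by
      rw [conv_l_r k H l r hmp]
    rw [h0, show (mu k H : H ⊗[k] H →ₗ[k] H) = LinearMap.mul' k H from rfl] at *
    rw [show delta k H ∘ₗ conv (SC k H) l r
        = conv (SC k H) (delta k H ∘ₗ l) (delta k H ∘ₗ r) from
      algHom_comp_conv (SC k H) (delta k H) (delta_algmap k H) l r]
    rw [delta_l k H l r hmp, delta_r k H l r hmp]
  rw [← e1, ← e2]

theorem K_comm (hmp : MatchedPairOfActions k H l r) :
    conv (SC k H) (inl r) (inr l) = conv (SC k H) (inr l) (inl r) := by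
  have hu : conv (SC k H) (inl (anti k H ∘ₗ l)) (inl l) = cunit (SC k H) := by
    rw [inl_conv, conv_anti_left k H (SC k H) l hmp.comul_l hmp.counit_l, inl_cunit]
  have hv : conv (SC k H) (inr r) (inr (anti k H ∘ₗ r)) = cunit (SC k H) := by
    rw [inr_conv, conv_anti_right k H (SC k H) r hmp.comul_r hmp.counit_r, inr_cunit]
  refine conv_cancel (SC k H) hu hv ?_
  calc conv (SC k H) (inl l) (conv (SC k H) (conv (SC k H) (inl r) (inr l)) (inr r))
      = conv (SC k H) (inl l) (conv (SC k H) (inl r) (conv (SC k H) (inr l) (inr r))) := by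
        rw [conv_assoc]
    _ = conv (SC k H) (conv (SC k H) (inl l) (inl r)) (conv (SC k H) (inr l) (inr r)) := by
        rw [conv_assoc]
    _ = conv (SC k H) (conv (SC k H) (inl l) (inr l)) (conv (SC k H) (inl r) (inr r)) :=
        E_eq k H l r hmp
    _ = conv (SC k H) (inl l) (conv (SC k H) (inr l) (conv (SC k H) (inl r) (inr r))) := by
        rw [conv_assoc]
    _ = conv (SC k H) (inl l) (conv (SC k H) (conv (SC k H) (inr l) (inl r)) (inr r)) := by
        rw [conv_assoc]

theorem r_nu (hmp : MatchedPairOfActions k H l r) : conv (SC k H) r (anti k H ∘ₗ mu k H) = anti k H ∘ₗ l := by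
  calc conv (SC k H) r (anti k H ∘ₗ mu k H)
      = conv (SC k H) (cunit (SC k H)) (conv (SC k H) r (anti k H ∘ₗ mu k H)) :=
        (conv_one_left _ _).symm
    _ = conv (SC k H) (conv (SC k H) (anti k H ∘ₗ l) l)
          (conv (SC k H) r (anti k H ∘ₗ mu k H)) := by
        rw [conv_anti_left k H (SC k H) l hmp.comul_l hmp.counit_l]
    _ = conv (SC k H) (anti k H ∘ₗ l)
          (conv (SC k H) l (conv (SC k H) r (anti k H ∘ₗ mu k H))) := by rw [conv_assoc]
    _ = conv (SC k H) (anti k H ∘ₗ l)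
          (conv (SC k H) (conv (SC k H) l r) (anti k H ∘ₗ mu k H)) := by rw [conv_assoc]
    _ = conv (SC k H) (anti k H ∘ₗ l)
          (conv (SC k H) (mu k H) (anti k H ∘ₗ mu k H)) := by rw [conv_l_r k H l r hmp]
    _ = conv (SC k H) (anti k H ∘ₗ l) (cunit (SC k H)) := by rw [mu_conv_nu]
    _ = anti k H ∘ₗ l := conv_one_right _ _

theorem main_chain (hmp : MatchedPairOfActions k H l r) : adL k H ∘ₗ l
    = conv (SC k H) (inl (mu k H))
        (conv (SC k H) (inr l) (inl (anti k H ∘ₗ mu k H))) := by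
  calc adL k H ∘ₗ l = conv (SH k H) (delta k H) (inl (anti k H)) ∘ₗ l := by rw [adL_eq]
    _ = conv (SC k H) (delta k H ∘ₗ l) (inl (anti k H) ∘ₗ l) :=
        conv_comp_coalgHom (SH k H) (SC k H) l hmp.comul_l _ _
    _ = conv (SC k H) (conv (SC k H) (inl l) (inr l)) (inl (anti k H ∘ₗ l)) := by
        rw [delta_l k H l r hmp, inl_comp]
    _ = conv (SC k H) (conv (SC k H) (inl l) (inr l))
          (inl (conv (SC k H) r (anti k H ∘ₗ mu k H))) := by rw [r_nu k H l r hmp]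
    _ = conv (SC k H) (conv (SC k H) (inl l) (inr l))
          (conv (SC k H) (inl r) (inl (anti k H ∘ₗ mu k H))) := by rw [inl_conv]
    _ = conv (SC k H) (inl l) (conv (SC k H) (inr l)
          (conv (SC k H) (inl r) (inl (anti k H ∘ₗ mu k H)))) := by rw [conv_assoc]
    _ = conv (SC k H) (inl l) (conv (SC k H) (conv (SC k H) (inr l) (inl r))
          (inl (anti k H ∘ₗ mu k H))) := by rw [conv_assoc]
    _ = conv (SC k H) (inl l) (conv (SC k H) (conv (SC k H) (inl r) (inr l))
          (inl (anti k H ∘ₗ mu k H))) := by rw [K_comm k H l r hmp]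
    _ = conv (SC k H) (inl l) (conv (SC k H) (inl r)
          (conv (SC k H) (inr l) (inl (anti k H ∘ₗ mu k H)))) := by rw [conv_assoc]
    _ = conv (SC k H) (conv (SC k H) (inl l) (inl r))
          (conv (SC k H) (inr l) (inl (anti k H ∘ₗ mu k H))) := by rw [conv_assoc]
    _ = conv (SC k H) (inl (conv (SC k H) l r))
          (conv (SC k H) (inr l) (inl (anti k H ∘ₗ mu k H))) := by rw [inl_conv]
    _ = conv (SC k H) (inl (mu k H))
          (conv (SC k H) (inr l) (inl (anti k H ∘ₗ mu k H))) := by rw [conv_l_r k H l r hmp]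

end Chain
end YD

namespace YD
open Coalgebra
open scoped Coalgebra

variable (k H : Type*) [Field k] [Ring H] [HopfAlgebra k H]

theorem eval_chain (l : H ⊗[k] H →ₗ[k] H) (a b : H) :
    conv (SC k H) (inl (mu k H)) (conv (SC k H) (inr l) (inl (anti k H ∘ₗ mu k H)))
        (a ⊗ₜ[k] b)
      = (LinearMap.mul' k (H ⊗[k] H)
          ∘ₗ map (inl (mu k H))
              (LinearMap.mul' k (H ⊗[k] H) ∘ₗ map (inr l) (inl (anti k H ∘ₗ mu k H)))
          ∘ₗ map LinearMap.id (ttcMap k H)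
          ∘ₗ (TensorProduct.tensorTensorTensorComm k H (H ⊗[k] H) H (H ⊗[k] H)).toLinearMap)
        ((map LinearMap.id (delta k H) (Coalgebra.comul a)) ⊗ₜ[k]
          (map LinearMap.id (delta k H) (Coalgebra.comul b))) := by
  have h0 : conv (SC k H) (inl (mu k H))
        (conv (SC k H) (inr l) (inl (anti k H ∘ₗ mu k H))) (a ⊗ₜ[k] b)
      = LinearMap.mul' k (H ⊗[k] H)
          (map (inl (mu k H)) (conv (SC k H) (inr l) (inl (anti k H ∘ₗ mu k H)))
            (ttcMap k H (Coalgebra.comul a ⊗ₜ[k] Coalgebra.comul b))) := rfl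
  have hsplit : map (inl (mu k H)) (conv (SC k H) (inr l) (inl (anti k H ∘ₗ mu k H)))
      = (map (inl (mu k H))
          (LinearMap.mul' k (H ⊗[k] H) ∘ₗ map (inr l) (inl (anti k H ∘ₗ mu k H))))
        ∘ₗ map LinearMap.id (dd k H) := by
    apply TensorProduct.ext'; intro u v; rfl
  have hB := LinearMap.congr_fun (stepB k H) (Coalgebra.comul a ⊗ₜ[k] Coalgebra.comul b)
  simp only [LinearMap.comp_apply] at hB
  simp only [map_tmul] at hB
  rw [h0, hsplit]
  simp only [LinearMap.comp_apply]
  rw [hB]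

end YD
/-- Lemma 3.7: for a matched pair of actions on a Hopf algebra `H`, the pair
`(⇀, Ad_L)` makes `H` a left-left Yetter–Drinfeld module over itself, i.e.
`Ad_L(a⇀b) = a₁•b₁•T(b₃)•T(a₃) ⊗ (a₂⇀b₂)`. -/
theorem adjoint_coaction_yetterDrinfeld (l r : H ⊗[k] H →ₗ[k] H)
    (hmp : MatchedPairOfActions k H l r) :
    ∀ (a b : H) (ι κ : Type) (s : Finset ι) (t : Finset κ)
      (a1 a2 a3 : ι → H) (b1 b2 b3 : κ → H),
      (map LinearMap.id (delta k H) ∘ₗ delta k H) a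
          = ∑ i ∈ s, a1 i ⊗ₜ[k] (a2 i ⊗ₜ[k] a3 i) →
      (map LinearMap.id (delta k H) ∘ₗ delta k H) b
          = ∑ j ∈ t, b1 j ⊗ₜ[k] (b2 j ⊗ₜ[k] b3 j) →
      adL k H (l (a ⊗ₜ[k] b))
        = ∑ i ∈ s, ∑ j ∈ t,
            (a1 i * b1 j * anti k H (b3 j) * anti k H (a3 i)) ⊗ₜ[k] l (a2 i ⊗ₜ[k] b2 j) := by
  intro a b ι κ s t a1 a2 a3 b1 b2 b3 h1 h2
  have hM := LinearMap.congr_fun (YD.main_chain k H l r hmp) (a ⊗ₜ[k] b)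
  simp only [LinearMap.comp_apply] at hM h1 h2
  rw [hM, YD.eval_chain k H l a b]
  rw [show map LinearMap.id (delta k H) (Coalgebra.comul a)
      = ∑ i ∈ s, a1 i ⊗ₜ[k] (a2 i ⊗ₜ[k] a3 i) from h1]
  rw [show map LinearMap.id (delta k H) (Coalgebra.comul b)
      = ∑ j ∈ t, b1 j ⊗ₜ[k] (b2 j ⊗ₜ[k] b3 j) from h2]
  rw [TensorProduct.sum_tmul]
  simp only [map_sum]
  refine Finset.sum_congr rfl fun i _ => ?_
  rw [TensorProduct.tmul_sum]
  simp only [map_sum]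
  refine Finset.sum_congr rfl fun j _ => ?_
  simp only [LinearMap.comp_apply, LinearEquiv.coe_coe,
    TensorProduct.tensorTensorTensorComm_tmul, ttcMap, map_tmul, LinearMap.id_coe, id_eq,
    YD.inl_apply, YD.inr_apply, LinearMap.mul'_apply,
    Algebra.TensorProduct.tmul_mul_tmul, one_mul, mul_one]
  rw [show mu k H (a3 i ⊗ₜ[k] b3 j) = a3 i * b3 j from rfl,
    show mu k H (a1 i ⊗ₜ[k] b1 j) = a1 i * b1 j from rfl,
    YD.antipode_mul k H (a3 i) (b3 j), ← mul_assoc]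

end
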